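/- Let k be a commutative ring, A a unital associative k-algebra, and n ≥ 2. Let μⁿ : A^{⊗n} → A be the k-linear map induced by the n-fold multiplication (a₁, …, aₙ) ↦ a₁a₂⋯aₙ on the n-fold tensor power of A over k. Then the kernel of μⁿ equals the sum over i = 0, …, n−2 of the k-submodules A^{⊗i} ⊗ Ω₁(A) ⊗ A^{⊗(n−2−i)} of A^{⊗n}, i.e. the sum of the images in A^{⊗n} of the canonical maps A^{⊗i} ⊗ Ω₁(A) ⊗ A^{⊗(n−2−i)} → A^{⊗n} induced by the inclusion Ω₁(A) ⊆ A ⊗ A. -/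

import Mathlib

open TensorProduct PiTensorProduct

/-- The `n`-ary multiplication map `μⁿ : A^{⊗n} → A` induced by
`(a₁, …, aₙ) ↦ a₁ a₂ ⋯ aₙ`. -/
noncomputable def nFoldMul (k : Type u) [CommRing k] (A : Type u) [Ring A] [Algebra k A]
    (n : ℕ) : (⨂[k] _ : Fin n, A) →ₗ[k] A :=
  PiTensorProduct.lift (MultilinearMap.mkPiAlgebraFin k n A)

/-- For `i + 2 ≤ n` and outer entries `g`, the canonical `k`-linear map
`A ⊗ A → A^{⊗n}` sending `x ⊗ y` to the elementary tensor whose entries are those of `g`,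
except that positions `i` and `i+1` carry `x` and `y`.  Its restriction to
`Ω₁(A) ⊆ A ⊗ A`, as `g` ranges over all tuples, realizes the canonical map
`A^{⊗i} ⊗ Ω₁(A) ⊗ A^{⊗(n−2−i)} → A^{⊗n}` induced by the inclusion `Ω₁(A) ⊆ A ⊗ A`. -/
noncomputable def insertPair (k : Type u) [CommRing k] (A : Type u) [Ring A] [Algebra k A]
    (n i : ℕ) (h : i + 2 ≤ n) (g : Fin n → A) : A ⊗[k] A →ₗ[k] ⨂[k] _ : Fin n, A :=
  TensorProduct.lift <| LinearMap.mk₂ k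
    (fun x y => PiTensorProduct.tprod k
      (Function.update (Function.update g ⟨i, by omega⟩ x) ⟨i + 1, by omega⟩ y))
    (fun x₁ x₂ y => by
      have hne : (⟨i, by omega⟩ : Fin n) ≠ ⟨i + 1, by omega⟩ := by
        simp [Fin.ext_iff]
      try dsimp only
      rw [Function.update_comm hne, Function.update_comm hne, Function.update_comm hne,
        MultilinearMap.map_update_add]
    )
    (fun c x y => by
      have hne : (⟨i, by omega⟩ : Fin n) ≠ ⟨i + 1, by omega⟩ := by
        simp [Fin.ext_iff]
      try dsimp only
      rw [Function.update_comm hne, Function.update_comm hne,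
        MultilinearMap.map_update_smul]
    )
    (fun x y₁ y₂ => by (try dsimp only); rw [MultilinearMap.map_update_add])
    (fun c x y => by (try dsimp only); rw [MultilinearMap.map_update_smul])

section Aux

variable (k : Type u) [CommRing k] (A : Type u) [Ring A] [Algebra k A]

lemma nFoldMul_tprod (n : ℕ) (f : Fin n → A) :
    nFoldMul k A n (tprod k f) = (List.ofFn f).prod := by
  simp [nFoldMul]

lemma insertPair_tmul (n i : ℕ) (h : i + 2 ≤ n) (g : Fin n → A) (x y : A) :
    insertPair k A n i h g (x ⊗ₜ[k] y) =
      tprod k (Function.update (Function.update g ⟨i, by omega⟩ x) ⟨i + 1, by omega⟩ y) := rfl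

lemma prod_split (n : ℕ) (g : Fin n → A) (i : ℕ) (h : i + 2 ≤ n) :
    (List.ofFn g).prod =
      ((List.ofFn g).take i).prod *
        (g ⟨i, by omega⟩ * (g ⟨i+1, by omega⟩ * ((List.ofFn g).drop (i+2)).prod)) := by
  conv_lhs => rw [← List.take_append_drop i (List.ofFn g)]
  have h1 : (List.ofFn g).drop i = g ⟨i, by omega⟩ :: (List.ofFn g).drop (i+1) := by
    rw [List.drop_eq_getElem_cons (by simp; omega)]
    simp
  have h2 : (List.ofFn g).drop (i+1) = g ⟨i+1, by omega⟩ :: (List.ofFn g).drop (i+2) := by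
    rw [List.drop_eq_getElem_cons (by simp; omega)]
    simp
  rw [List.prod_append, h1, h2, List.prod_cons, List.prod_cons]

lemma take_update (n : ℕ) (f g : Fin n → A) (i : ℕ)
    (hfg : ∀ j : Fin n, j.1 < i → f j = g j) :
    (List.ofFn f).take i = (List.ofFn g).take i := by
  apply List.ext_getElem (by simp)
  intro j h1 h2
  simp only [List.length_take, List.length_ofFn, lt_min_iff] at h1
  simp only [List.getElem_take, List.getElem_ofFn]
  exact hfg ⟨j, h1.2⟩ h1.1

lemma drop_update (n : ℕ) (f g : Fin n → A) (i : ℕ)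
    (hfg : ∀ j : Fin n, i ≤ j.1 → f j = g j) :
    (List.ofFn f).drop i = (List.ofFn g).drop i := by
  apply List.ext_getElem (by simp)
  intro j h1 h2
  simp only [List.length_drop, List.length_ofFn] at h1
  simp only [List.getElem_drop, List.getElem_ofFn]
  exact hfg ⟨i + j, by omega⟩ (Nat.le_add_right _ _)

lemma nFoldMul_insertPair (n i : ℕ) (h : i + 2 ≤ n) (g : Fin n → A) (t : A ⊗[k] A) :
    nFoldMul k A n (insertPair k A n i h g t) =
      ((List.ofFn g).take i).prod *
        (LinearMap.mul' k A t * ((List.ofFn g).drop (i+2)).prod) := by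
  induction t with
  | zero => simp
  | tmul x y =>
      rw [insertPair_tmul, nFoldMul_tprod, LinearMap.mul'_apply]
      set f := Function.update (Function.update g ⟨i, by omega⟩ x) ⟨i + 1, by omega⟩ y with hf
      rw [prod_split A n f i h]
      have hi : f ⟨i, by omega⟩ = x := by
        rw [hf, Function.update_of_ne (by simp [Fin.ext_iff]), Function.update_self]
      have hi1 : f ⟨i+1, by omega⟩ = y := by rw [hf, Function.update_self]
      have ht : (List.ofFn f).take i = (List.ofFn g).take i := by
        apply take_update
        intro j hj
        rw [hf, Function.update_of_ne (by simp [Fin.ext_iff]; omega),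
          Function.update_of_ne (by simp [Fin.ext_iff]; omega)]
      have hd : (List.ofFn f).drop (i+2) = (List.ofFn g).drop (i+2) := by
        apply drop_update
        intro j hj
        rw [hf, Function.update_of_ne (by simp [Fin.ext_iff]; omega),
          Function.update_of_ne (by simp [Fin.ext_iff]; omega)]
      rw [hi, hi1, ht, hd, mul_assoc]
  | add a b ha hb => simp only [map_add, ha, hb, mul_add, add_mul]

end Aux

/-- For `n ≥ 2`, the kernel of the `n`-ary multiplication `μⁿ : A^{⊗n} → A` equals the sum,
over `i = 0, …, n − 2`, of the images in `A^{⊗n}` of the canonical maps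
`A^{⊗i} ⊗ Ω₁(A) ⊗ A^{⊗(n−2−i)} → A^{⊗n}` induced by the inclusion `Ω₁(A) ⊆ A ⊗ A`. -/
theorem ker_nFoldMul_eq_sum (k : Type u) [CommRing k] (A : Type u) [Ring A] [Algebra k A]
    (n : ℕ) (hn : 2 ≤ n) :
    LinearMap.ker (nFoldMul k A n) =
      ⨆ (i : ℕ) (h : i + 2 ≤ n) (g : Fin n → A),
        Submodule.map (insertPair k A n i h g) (LinearMap.ker (LinearMap.mul' k A)) := by
  have h0 : 0 < n := by omega
  set S := ⨆ (i : ℕ) (h : i + 2 ≤ n) (g : Fin n → A),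
        Submodule.map (insertPair k A n i h g) (LinearMap.ker (LinearMap.mul' k A)) with hS
  -- easy direction
  have hSle : S ≤ LinearMap.ker (nFoldMul k A n) := by
    rw [hS]
    refine iSup_le fun i => iSup_le fun h => iSup_le fun g => ?_
    rintro x ⟨t, ht, rfl⟩
    simp only [SetLike.mem_coe, LinearMap.mem_ker] at ht
    rw [LinearMap.mem_ker, nFoldMul_insertPair, ht, zero_mul, mul_zero]
  -- step lemma
  have step : ∀ (i : ℕ) (h : i + 2 ≤ n) (f : Fin n → A),
      tprod k f - tprod k (Function.update (Function.update f ⟨i, by omega⟩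
        (f ⟨i, by omega⟩ * f ⟨i+1, by omega⟩)) ⟨i+1, by omega⟩ 1) ∈ S := by
    intro i h f
    have hmem : (f ⟨i, by omega⟩ ⊗ₜ[k] f ⟨i+1, by omega⟩
        - (f ⟨i, by omega⟩ * f ⟨i+1, by omega⟩) ⊗ₜ[k] (1 : A))
        ∈ LinearMap.ker (LinearMap.mul' k A) := by
      simp [LinearMap.mul'_apply]
    have := Submodule.mem_map_of_mem (f := insertPair k A n i h f) hmem
    rw [map_sub, insertPair_tmul, insertPair_tmul] at this
    rw [Function.update_eq_self, Function.update_eq_self] at this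
    exact Submodule.mem_iSup_of_mem i (Submodule.mem_iSup_of_mem h
      (Submodule.mem_iSup_of_mem f this))
  -- the map ψ
  let ψ : A →ₗ[k] ⨂[k] _ : Fin n, A :=
    { toFun := fun a => tprod k (Function.update (fun _ => (1:A)) ⟨0, h0⟩ a)
      map_add' := fun x y => MultilinearMap.map_update_add _ _ _ _ _
      map_smul' := fun c x => MultilinearMap.map_update_smul _ _ _ _ _ }
  -- key induction
  have main : ∀ (d : ℕ) (f : Fin n → A), (∀ j : Fin n, d ≤ j.1 → f j = 1) →
      tprod k f - ψ ((List.ofFn f).prod) ∈ S := by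
    intro d
    induction d with
    | zero =>
        intro f hf
        have hf1 : f = fun _ => 1 := funext fun j => hf j (Nat.zero_le _)
        subst hf1
        have h1 : (List.ofFn fun _ : Fin n => (1:A)).prod = 1 := by
          apply List.prod_eq_one; intro x hx
          simp only [List.mem_ofFn, Set.mem_range] at hx
          obtain ⟨i, rfl⟩ := hx; rfl
        rw [h1]
        have h2 : ψ 1 = tprod k (fun _ : Fin n => (1:A)) := by
          show PiTensorProduct.tprod k _ = _
          rw [show Function.update (fun _ : Fin n => (1:A)) ⟨0, h0⟩ 1 = fun _ => 1 from
            Function.update_eq_self _ _]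
        rw [h2, sub_self]
        exact Submodule.zero_mem S
    | succ d ih =>
        intro f hf
        rcases Nat.eq_zero_or_pos d with rfl | hd
        · -- d = 0 : f j = 1 for j ≥ 1
          have hfu : f = Function.update (fun _ => (1:A)) ⟨0, h0⟩ (f ⟨0, h0⟩) := by
            funext j
            by_cases hj : j = ⟨0, h0⟩
            · rw [hj, Function.update_self]
            · rw [Function.update_of_ne hj]
              exact hf j (by simp [Fin.ext_iff] at hj; omega)
          have hprod : (List.ofFn f).prod = f ⟨0, h0⟩ := by
            obtain ⟨m, rfl⟩ : ∃ m, n = m + 1 := ⟨n - 1, by omega⟩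
            rw [List.ofFn_succ, List.prod_cons]
            have h1 : (List.ofFn fun i : Fin m => f i.succ).prod = 1 := by
              apply List.prod_eq_one; intro x hx
              simp only [List.mem_ofFn, Set.mem_range] at hx
              obtain ⟨i, rfl⟩ := hx
              exact hf _ (by simp)
            rw [h1, mul_one]
            rfl
          rw [hprod]
          have h2 : ψ (f ⟨0, h0⟩) = tprod k f := by
            show PiTensorProduct.tprod k _ = _
            rw [← hfu]
          rw [h2, sub_self]
          exact Submodule.zero_mem S
        · by_cases hdn : d + 1 ≤ n
          · -- combine positions d-1 and d
            have h2 : (d - 1) + 2 ≤ n := by omega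
            set f' := Function.update (Function.update f ⟨d - 1, by omega⟩
              (f ⟨d - 1, by omega⟩ * f ⟨(d-1)+1, by omega⟩)) ⟨(d-1)+1, by omega⟩ (1:A) with hf'
            have hstep := step (d-1) h2 f
            rw [← hf'] at hstep
            have hf'1 : ∀ j : Fin n, d ≤ j.1 → f' j = 1 := by
              intro j hj
              by_cases hjd : j = ⟨(d-1)+1, by omega⟩
              · rw [hjd, hf', Function.update_self]
              · rw [hf', Function.update_of_ne hjd,
                  Function.update_of_ne (by simp [Fin.ext_iff]; omega)]
                exact hf j (by simp [Fin.ext_iff] at hjd; omega)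
            have ih' := ih f' hf'1
            have hprod : (List.ofFn f').prod = (List.ofFn f).prod := by
              have hk := hSle hstep
              rw [LinearMap.mem_ker, map_sub, sub_eq_zero, nFoldMul_tprod,
                nFoldMul_tprod] at hk
              exact hk.symm
            have hsplit : tprod k f - ψ ((List.ofFn f).prod) =
                (tprod k f - tprod k f') + (tprod k f' - ψ ((List.ofFn f').prod)) := by
              rw [hprod]; abel
            rw [hsplit]
            exact Submodule.add_mem S hstep ih'
          · -- vacuous
            exact ih f (fun j hj => absurd (lt_of_le_of_lt hj j.2) (by omega))
  refine le_antisymm ?_ hSle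
  intro x hx
  rw [LinearMap.mem_ker] at hx
  have key : ∀ t : ⨂[k] _ : Fin n, A, t - ψ (nFoldMul k A n t) ∈ S := by
    intro t
    induction t using PiTensorProduct.induction_on with
    | smul_tprod r f =>
        rw [map_smul, map_smul, ← smul_sub, nFoldMul_tprod]
        exact Submodule.smul_mem S r (main n f (fun j hj => absurd j.2 (by omega)))
    | add a b ha hb =>
        rw [map_add, map_add]
        have hab : a + b - (ψ (nFoldMul k A n a) + ψ (nFoldMul k A n b)) =
            (a - ψ (nFoldMul k A n a)) + (b - ψ (nFoldMul k A n b)) := by abel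
        rw [hab]
        exact Submodule.add_mem S ha hb
  have hx2 := key x
  rw [hx, map_zero, sub_zero] at hx2
  exact hx2
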